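/- Let A, B be finite algebras in a Taylor variety, R a subdirect subalgebra of A × B, C a minimal absorbing subalgebra of A, and D a minimal absorbing subalgebra of B. If (C × D) ∩ R is nonempty, then (C × D) ∩ R is subdirect in C × D. -/

import Mathlib

structure Signature : Type 1 where
  symbols : Type
  arity : symbols → ℕ

structure UAlgebra (σ : Signature) : Type 1 where
  carrier : Type
  op : ∀ s : σ.symbols, (Fin (σ.arity s) → carrier) → carrier

inductive Term (σ : Signature) (n : ℕ) : Type
  | var : Fin n → Term σ n
  | app (s : σ.symbols) : (Fin (σ.arity s) → Term σ n) → Term σ n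

def Term.eval {σ : Signature} (A : UAlgebra σ) {n : ℕ} :
    Term σ n → (Fin n → A.carrier) → A.carrier
  | .var i, x => x i
  | .app s ts, x => A.op s fun j => Term.eval A (ts j) x

/-- `B` is a subuniverse of the algebra `A`. -/
def Subuniverse {σ : Signature} (A : UAlgebra σ) (B : Set A.carrier) : Prop :=
  ∀ (s : σ.symbols) (a : Fin (σ.arity s) → A.carrier), (∀ i, a i ∈ B) → A.op s a ∈ B

/-- `B` absorbs `A` with respect to the term `t`. -/
def AbsorbsWith {σ : Signature} (A : UAlgebra σ) (B : Set A.carrier) {n : ℕ} (t : Term σ n) : Prop :=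
  ∀ (k : Fin n) (a : Fin n → A.carrier), (∀ i, i ≠ k → a i ∈ B) → t.eval A a ∈ B

/-- `C` absorbs the subalgebra with universe `B` (inside the ambient algebra `A`)
with respect to the term `t`. -/
def AbsorbsWithIn {σ : Signature} (A : UAlgebra σ) (B C : Set A.carrier) {n : ℕ}
    (t : Term σ n) : Prop :=
  ∀ (k : Fin n) (a : Fin n → A.carrier), (∀ i, a i ∈ B) → (∀ i, i ≠ k → a i ∈ C) →
    t.eval A a ∈ C

/-- `B` is an absorbing subalgebra (subuniverse) of `A`. -/
def Absorbing {σ : Signature} (A : UAlgebra σ) (B : Set A.carrier) : Prop :=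
  Subuniverse A B ∧ ∃ (n : ℕ) (t : Term σ n), AbsorbsWith A B t

/-- `B` is a proper absorbing subalgebra of `A`: `∅ ≠ B ≠ A`. -/
def ProperAbsorbing {σ : Signature} (A : UAlgebra σ) (B : Set A.carrier) : Prop :=
  Absorbing A B ∧ B.Nonempty ∧ B ≠ Set.univ

/-- `C` is a minimal absorbing subalgebra of `A`. -/
def MinAbsorbing {σ : Signature} (A : UAlgebra σ) (C : Set A.carrier) : Prop :=
  Absorbing A C ∧ C.Nonempty ∧ ∀ C' ⊆ C, Absorbing A C' → C'.Nonempty → C' = C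

/-- All (basic, equivalently term) operations of `A` are idempotent. -/
def Idempotent {σ : Signature} (A : UAlgebra σ) : Prop :=
  ∀ (s : σ.symbols) (a : A.carrier), A.op s (fun _ => a) = a

/-- `t` is a Taylor term of the algebra `A`. -/
def IsTaylorTerm {σ : Signature} (A : UAlgebra σ) {k : ℕ} (t : Term σ k) : Prop :=
  (∀ a : A.carrier, t.eval A (fun _ => a) = a) ∧
  ∀ j : Fin k, ∃ u v : Fin k → Fin 2, u j = 0 ∧ v j = 1 ∧
    ∀ x : Fin 2 → A.carrier, t.eval A (fun i => x (u i)) = t.eval A (fun i => x (v i))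

/-- The product of two algebras of the same signature. -/
def UAlgebra.prod {σ : Signature} (A B : UAlgebra σ) : UAlgebra σ where
  carrier := A.carrier × B.carrier
  op s x := (A.op s fun i => (x i).1, B.op s fun i => (x i).2)

/-- The `k`-th power of an algebra. -/
def UAlgebra.pow {σ : Signature} (A : UAlgebra σ) (k : ℕ) : UAlgebra σ where
  carrier := Fin k → A.carrier
  op s x := fun j => A.op s fun i => x i j

/-- `R ⊆ A × B` is subdirect: both projections are onto. -/
def Subdirect2 {α β : Type} (R : Set (α × β)) : Prop :=
  (∀ a, ∃ b, (a, b) ∈ R) ∧ ∀ b, ∃ a, (a, b) ∈ R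

/-- `a` and `a'` are linked in `R` (connected in the bipartite graph of `R`). -/
def LinkedPair {α β : Type} (R : Set (α × β)) (a a' : α) : Prop :=
  Relation.ReflTransGen (fun x y => ∃ b, (x, b) ∈ R ∧ (y, b) ∈ R) a a'

/-- `R` is linked: any two elements of the projection of `R` to the first
coordinate are `R`-linked. -/
def IsLinked {α β : Type} (R : Set (α × β)) : Prop :=
  ∀ a a', (∃ b, (a, b) ∈ R) → (∃ b, (a', b) ∈ R) → LinkedPair R a a'

/-- Cyclic shift of a `k`-tuple. -/
def cycShift {α : Type} {k : ℕ} (x : Fin k → α) : Fin k → α := fun i =>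
  x ⟨(i.val + 1) % k, Nat.mod_lt _ (Nat.lt_of_le_of_lt (Nat.zero_le _) i.isLt)⟩

/-- `t` is a cyclic term of `A`: idempotent and invariant under cyclic shift. -/
def IsCyclicTerm {σ : Signature} (A : UAlgebra σ) {k : ℕ} (t : Term σ k) : Prop :=
  (∀ a : A.carrier, t.eval A (fun _ => a) = a) ∧
  ∀ x : Fin k → A.carrier, t.eval A x = t.eval A (cycShift x)



namespace MinAbsAux
variable {σ : Signature}

def Term.subst {n m : ℕ} : Term σ n → (Fin n → Term σ m) → Term σ m
  | .var i, f => f i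
  | .app s ts, f => .app s (fun j => Term.subst (ts j) f)

theorem eval_subst (A : UAlgebra σ) {n m : ℕ} (t : Term σ n) (f : Fin n → Term σ m)
    (x : Fin m → A.carrier) :
    (Term.subst t f).eval A x = t.eval A (fun i => (f i).eval A x) := by
  induction t with
  | var i => rfl
  | app s ts ih => simp only [Term.subst, Term.eval, ih]

theorem subuniv_closed (A : UAlgebra σ) {B : Set A.carrier} (hB : Subuniverse A B)
    {n : ℕ} (t : Term σ n) (x : Fin n → A.carrier) (hx : ∀ i, x i ∈ B) :
    t.eval A x ∈ B := by
  induction t with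
  | var i => exact hx i
  | app s ts ih => exact hB s _ (fun i => ih i)

def enc {n m : ℕ} (i : Fin n) (j : Fin m) : Fin (n * m) :=
  ⟨i.val * m + j.val, by
    calc i.val * m + j.val < i.val * m + m := by omega
    _ = (i.val + 1) * m := by ring
    _ ≤ n * m := Nat.mul_le_mul_right m i.isLt⟩

theorem enc_div {n m : ℕ} (i : Fin n) (j : Fin m) : (enc i j).val / m = i.val := by
  have hm : 0 < m := j.pos
  show (i.val * m + j.val) / m = i.val
  rw [Nat.mul_comm, Nat.mul_add_div hm, Nat.div_eq_of_lt j.isLt]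
  omega

theorem enc_mod {n m : ℕ} (i : Fin n) (j : Fin m) : (enc i j).val % m = j.val := by
  show (i.val * m + j.val) % m = j.val
  rw [Nat.add_comm, Nat.add_mul_mod_self_right, Nat.mod_eq_of_lt j.isLt]

def compT {n m : ℕ} (t₁ : Term σ n) (t₂ : Term σ m) : Term σ (n * m) :=
  Term.subst t₁ (fun i => Term.subst t₂ (fun j => Term.var (enc i j)))

theorem eval_compT (A : UAlgebra σ) {n m : ℕ} (t₁ : Term σ n) (t₂ : Term σ m)
    (x : Fin (n * m) → A.carrier) :
    (compT t₁ t₂).eval A x = t₁.eval A (fun i => t₂.eval A (fun j => x (enc i j))) := by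
  simp only [compT, eval_subst]
  rfl

theorem fin_m_pos {n m : ℕ} (k : Fin (n * m)) : 0 < m := by
  rcases Nat.eq_zero_or_pos m with h | h
  · exact absurd k.isLt (by simp [h])
  · exact h

theorem compT_absorbs_outer (A : UAlgebra σ) {C : Set A.carrier}
    (hSub : Subuniverse A C) {n m : ℕ} {t₁ : Term σ n} (t₂ : Term σ m)
    (h₁ : AbsorbsWith A C t₁) : AbsorbsWith A C (compT t₁ t₂) := by
  intro k a ha
  have hm : 0 < m := fin_m_pos k
  rw [eval_compT]
  apply h₁ ⟨k.val / m, (Nat.div_lt_iff_lt_mul hm).2 k.isLt⟩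
  intro i hi
  apply subuniv_closed A hSub t₂
  intro j
  apply ha
  intro hcon
  apply hi
  have h := enc_div i j
  rw [hcon] at h
  exact Fin.ext h.symm

theorem compT_absorbs_inner (A : UAlgebra σ) {D : Set A.carrier}
    (hSub : Subuniverse A D) {n m : ℕ} (t₁ : Term σ n) {t₂ : Term σ m}
    (h₂ : AbsorbsWith A D t₂) : AbsorbsWith A D (compT t₁ t₂) := by
  intro k a ha
  have hm : 0 < m := fin_m_pos k
  rw [eval_compT]
  apply subuniv_closed A hSub t₁
  intro i
  by_cases hik : i.val = k.val / m
  · apply h₂ ⟨k.val % m, Nat.mod_lt _ hm⟩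
    intro j hj
    apply ha
    intro hcon
    apply hj
    have h := enc_mod i j
    rw [hcon] at h
    exact Fin.ext h.symm
  · apply subuniv_closed A hSub t₂
    intro j
    apply ha
    intro hcon
    apply hik
    have h := enc_div i j
    rw [hcon] at h
    exact h.symm

theorem eval_prod (A B : UAlgebra σ) {n : ℕ} (t : Term σ n)
    (x : Fin n → (A.prod B).carrier) :
    t.eval (A.prod B) x = (t.eval A (fun i => (x i).1), t.eval B (fun i => (x i).2)) := by
  induction t with
  | var i => rfl
  | app s ts ih =>
    simp only [Term.eval, ih]
    rfl

end MinAbsAux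

open MinAbsAux in
/-- If `C ◁◁ A`, `D ◁◁ B` and `(C × D) ∩ R ≠ ∅` for a subdirect
subuniverse `R` of `A × B`, then `(C × D) ∩ R` is subdirect in `C × D`. -/
theorem minabs_inter_subdirect {σ : Signature} (A B : UAlgebra σ)
    [Fintype A.carrier] [Fintype B.carrier]
    (hIA : Idempotent A) (hIB : Idempotent B)
    {k : ℕ} (t : Term σ k) (hTA : IsTaylorTerm A t) (hTB : IsTaylorTerm B t)
    (R : Set (A.carrier × B.carrier)) (hR : Subuniverse (A.prod B) R)
    (hsub : Subdirect2 R)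
    (C : Set A.carrier) (D : Set B.carrier)
    (hC : MinAbsorbing A C) (hD : MinAbsorbing B D)
    (hne : ((C ×ˢ D) ∩ R).Nonempty) :
    (∀ c ∈ C, ∃ d ∈ D, (c, d) ∈ R) ∧ (∀ d ∈ D, ∃ c ∈ C, (c, d) ∈ R) := by
  obtain ⟨⟨hCsub, nC, tC, hCabs⟩, hCne, hCmin⟩ := hC
  obtain ⟨⟨hDsub, nD, tD, hDabs⟩, hDne, hDmin⟩ := hD
  set w := compT tC tD with hw
  have hwC : AbsorbsWith A C w := compT_absorbs_outer A hCsub tD hCabs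
  have hwD : AbsorbsWith B D w := compT_absorbs_inner B hDsub tC hDabs
  obtain ⟨⟨c₀, d₀⟩, hcd₀, hr₀⟩ := hne
  constructor
  · set E : Set A.carrier := {a | a ∈ C ∧ ∃ d ∈ D, (a, d) ∈ R} with hE
    have hEsub : Subuniverse A E := by
      intro s a haE
      choose d hd hrd using fun i => (haE i).2
      refine ⟨hCsub s a (fun i => (haE i).1), B.op s d, hDsub s d hd, ?_⟩
      exact hR s (fun i => (a i, d i)) hrd
    have hEabs : AbsorbsWith A E w := by
      intro k a haE
      have hch : ∀ i, ∃ b, (a i, b) ∈ R ∧ (i ≠ k → b ∈ D) := by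
        intro i
        by_cases hik : i = k
        · obtain ⟨b, hb⟩ := hsub.1 (a i)
          exact ⟨b, hb, fun h => absurd hik h⟩
        · obtain ⟨b, hbD, hbR⟩ := (haE i hik).2
          exact ⟨b, hbR, fun _ => hbD⟩
      choose d hdR hdD using hch
      have hmemR : (w.eval A a, w.eval B d) ∈ R := by
        have h := subuniv_closed (A.prod B) hR w (fun i => (a i, d i)) hdR
        replace h := Eq.mp (congrArg (· ∈ R) (eval_prod A B w (fun i => (a i, d i)))) h
        exact h
      exact ⟨hwC k a (fun i hi => (haE i hi).1), w.eval B d, hwD k d hdD, hmemR⟩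
    have hEeq : E = C :=
      hCmin E (fun x hx => hx.1) ⟨hEsub, _, w, hEabs⟩
        ⟨c₀, hcd₀.1, d₀, hcd₀.2, hr₀⟩
    intro c hc
    have hcE : c ∈ E := hEeq ▸ hc
    exact hcE.2
  · set F : Set B.carrier := {b | b ∈ D ∧ ∃ c ∈ C, (c, b) ∈ R} with hF
    have hFsub : Subuniverse B F := by
      intro s b hbF
      choose c hc hrc using fun i => (hbF i).2
      refine ⟨hDsub s b (fun i => (hbF i).1), A.op s c, hCsub s c hc, ?_⟩
      exact hR s (fun i => (c i, b i)) hrc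
    have hFabs : AbsorbsWith B F w := by
      intro k b hbF
      have hch : ∀ i, ∃ a, (a, b i) ∈ R ∧ (i ≠ k → a ∈ C) := by
        intro i
        by_cases hik : i = k
        · obtain ⟨a, ha⟩ := hsub.2 (b i)
          exact ⟨a, ha, fun h => absurd hik h⟩
        · obtain ⟨a, haC, haR⟩ := (hbF i hik).2
          exact ⟨a, haR, fun _ => haC⟩
      choose c hcR hcC using hch
      have hmemR : (w.eval A c, w.eval B b) ∈ R := by
        have h := subuniv_closed (A.prod B) hR w (fun i => (c i, b i)) hcR
        replace h := Eq.mp (congrArg (· ∈ R) (eval_prod A B w (fun i => (c i, b i)))) h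
        exact h
      exact ⟨hwD k b (fun i hi => (hbF i hi).1), w.eval A c, hwC k c hcC, hmemR⟩
    have hFeq : F = D :=
      hDmin F (fun x hx => hx.1) ⟨hFsub, _, w, hFabs⟩
        ⟨d₀, hcd₀.2, c₀, hcd₀.1, hr₀⟩
    intro d hd
    have hdF : d ∈ F := hFeq ▸ hd
    exact hdF.2
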